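/- Let Γ be a binary group of order 2n with unique involution λ. If A = (∞, α₁, …, α_{2n}) is a (2n+1)-cycle on {∞} ∪ Γ with A·λ = A and {α_i α_{i+1}^{-1}, α_{i+1} α_i^{-1} : i ∈ [n−1]} = Γ \ {1, λ}, then the set of distinct right translates {A·x : x ∈ X}, where X is a complete system of representatives of the cosets of {1, λ} in Γ, is a 1-rotational HCS(2n+1) over Γ. -/

import Mathlib

open Pointwise

variable {V : Type*}

/-- The action of a permutation on a simple graph by relabelling vertices. -/
instance permGraphAction : MulAction (Equiv.Perm V) (SimpleGraph V) where
  smul σ H := H.map σ.toEmbedding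
  one_smul H := by
    show H.map (1 : Equiv.Perm V).toEmbedding = H
    ext a b
    simp [SimpleGraph.map_adj]
  mul_smul σ τ H := by
    ext a b
    show (H.map (σ * τ).toEmbedding).Adj a b ↔ ((H.map τ.toEmbedding).map σ.toEmbedding).Adj a b
    rw [SimpleGraph.map_adj, SimpleGraph.map_adj]
    simp only [SimpleGraph.map_adj τ.toEmbedding]
    simp only [Equiv.coe_toEmbedding, Equiv.Perm.coe_mul,
      Function.comp_apply]
    constructor
    · rintro ⟨u, v, h, rfl, rfl⟩
      exact ⟨τ u, τ v, ⟨u, v, h, rfl, rfl⟩, rfl, rfl⟩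
    · rintro ⟨-, -, ⟨u, v, h, rfl, rfl⟩, rfl, rfl⟩
      exact ⟨u, v, h, rfl, rfl⟩

lemma perm_smul_graph (σ : Equiv.Perm V) (H : SimpleGraph V) :
    σ • H = H.map σ.toEmbedding := rfl

/-- A Hamiltonian cycle of the complete graph on `V`: a connected, 2-regular
(spanning) subgraph. -/
def IsHamCycle [Fintype V] (H : SimpleGraph V) : Prop :=
  H.Connected ∧ ∀ v : V, (H.neighborSet v).ncard = 2

lemma smul_adj' (σ : Equiv.Perm V) (H : SimpleGraph V) (a b : V) :
    (σ • H).Adj a b ↔ H.Adj (σ⁻¹ a) (σ⁻¹ b) := by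
  show (H.map σ.toEmbedding).Adj a b ↔ _
  rw [SimpleGraph.map_adj]
  constructor
  · rintro ⟨u, v, h, rfl, rfl⟩
    simpa using h
  · intro h
    exact ⟨σ⁻¹ a, σ⁻¹ b, h, by simp, by simp⟩

lemma ham_smul [Fintype V] (σ : Equiv.Perm V) {H : SimpleGraph V} (h : IsHamCycle H) :
    IsHamCycle (σ • H) := by
  constructor
  · rw [perm_smul_graph]
    exact h.1.map (SimpleGraph.Iso.map (σ : V ≃ V) H).toHom
      (fun w => ⟨σ.symm w, by simp⟩)
  · intro v
    have hset : (σ • H).neighborSet v = σ '' H.neighborSet (σ⁻¹ v) := by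
      ext w
      simp only [SimpleGraph.mem_neighborSet, smul_adj', Set.mem_image]
      constructor
      · intro hw
        exact ⟨σ⁻¹ w, hw, by simp⟩
      · rintro ⟨u, hu, rfl⟩
        simpa using hu
    rw [hset, Set.ncard_image_of_injective _ σ.injective]
    exact h.2 _

lemma optionCongr_mulRight_apply {Γ : Type*} [Group Γ] (a : Γ) (u : Option Γ) :
    Equiv.optionCongr (Equiv.mulRight a) u = u.map (· * a) := by
  cases u <;> simp

lemma sigma_mul {Γ : Type*} [Group Γ] (a b : Γ) :
    Equiv.optionCongr (Equiv.mulRight a) * Equiv.optionCongr (Equiv.mulRight b)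
      = Equiv.optionCongr (Equiv.mulRight (b * a)) := by
  ext x
  rw [Equiv.Perm.mul_apply]
  cases x <;> simp [mul_assoc]

lemma sigma_one {Γ : Type*} [Group Γ] :
    Equiv.optionCongr (Equiv.mulRight (1 : Γ)) = 1 := by
  ext x
  cases x <;> simp

lemma sigma_inv {Γ : Type*} [Group Γ] (a : Γ) :
    (Equiv.optionCongr (Equiv.mulRight a))⁻¹ = Equiv.optionCongr (Equiv.mulRight a⁻¹) := by
  apply inv_eq_of_mul_eq_one_right
  rw [sigma_mul, inv_mul_cancel, sigma_one]

/-- A Hamiltonian cycle system: a set of Hamiltonian cycles whose edge sets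
partition the edge set of the complete graph. -/
def IsHCS [Fintype V] (𝓗 : Set (SimpleGraph V)) : Prop :=
  (∀ H ∈ 𝓗, IsHamCycle H) ∧
    ∀ e ∈ (⊤ : SimpleGraph V).edgeSet, ∃! H, H ∈ 𝓗 ∧ e ∈ H.edgeSet

/-- The full automorphism group of a Hamiltonian cycle system, as the subgroup
of vertex permutations preserving the set of cycles. -/
def autHCS (𝓗 : Set (SimpleGraph V)) : Subgroup (Equiv.Perm V) :=
  MulAction.stabilizer (Equiv.Perm V) 𝓗

/-- The cycle graph traced by a map from `ZMod m` (consecutive residues are adjacent). -/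
def cycleOn {W : Type*} (m : ℕ) (f : ZMod m → W) : SimpleGraph W :=
  SimpleGraph.fromRel (fun a b => ∃ i : ZMod m, f i = a ∧ f (i + 1) = b)

/-- a starter cycle `A` on `{∞} ∪ Γ` fixed by the unique involution `l` and
whose consecutive differences over `i ∈ [n-1]` cover `Γ \ {1, l}` generates, by right
translations, a 1-rotational HCS of order `2n+1` over `Γ`. -/
theorem starter_gives_one_rotational_hcs {Γ : Type*} [Group Γ] [Fintype Γ]
    (n : ℕ) (hcard : Fintype.card Γ = 2 * n)
    (l : Γ) (hl : orderOf l = 2) (hbin : ∃! x : Γ, orderOf x = 2)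
    (f : ZMod (2*n+1) → Option Γ) (hf : Function.Bijective f) (hf0 : f 0 = none)
    (hfix : (Equiv.optionCongr (Equiv.mulRight l)) • cycleOn (2*n+1) f = cycleOn (2*n+1) f)
    (hdiff : {x : Γ | ∃ i : ℕ, 1 ≤ i ∧ i ≤ n - 1 ∧ ∃ a b : Γ,
        f ((i : ℕ) : ZMod (2*n+1)) = some a ∧ f (((i : ℕ) : ZMod (2*n+1)) + 1) = some b ∧
        (x = a * b⁻¹ ∨ x = b * a⁻¹)} = {x : Γ | x ≠ 1 ∧ x ≠ l}) :
    IsHCS (Set.range fun g : Γ =>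
        (Equiv.optionCongr (Equiv.mulRight g)) • cycleOn (2*n+1) f) ∧
      ∀ g : Γ, Equiv.optionCongr (Equiv.mulRight g) ∈
        autHCS (Set.range fun g : Γ =>
          (Equiv.optionCongr (Equiv.mulRight g)) • cycleOn (2*n+1) f) := by
  classical
  have hfi := hf.injective
  have hfs := hf.surjective
  set C : SimpleGraph (Option Γ) := cycleOn (2*n+1) f with hCdef
  set T : Γ → SimpleGraph (Option Γ) :=
    fun x => (Equiv.optionCongr (Equiv.mulRight x)) • C with hT
  -- arithmetic facts
  have hn : 1 ≤ n := by
    have := Fintype.card_pos (α := Γ)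
    omega
  have hcastne : ∀ i : ℕ, 1 ≤ i → i ≤ 2*n → ((i : ZMod (2*n+1)) ≠ 0) := by
    intro i h1 h2 h0
    rw [ZMod.natCast_eq_zero_iff] at h0
    have := Nat.le_of_dvd (by omega) h0
    omega
  have hone : (1 : ZMod (2*n+1)) ≠ 0 := by
    have := hcastne 1 le_rfl (by omega)
    simpa using this
  have htwo : (2 : ZMod (2*n+1)) ≠ 0 := by
    have := hcastne 2 (by omega) (by omega)
    simpa using this
  have htwo2 : ∀ i : ZMod (2*n+1), i ≠ i + 1 := by
    intro i h
    exact hone (left_eq_add.mp h)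
  -- involution facts
  have hl1 : l ≠ 1 := by
    intro h
    rw [h, orderOf_one] at hl
    omega
  have hll : l * l = 1 := by
    have := pow_orderOf_eq_one l
    rw [hl, pow_two] at this
    exact this
  have hlinv : l⁻¹ = l := inv_eq_of_mul_eq_one_right hll
  have hcent : ∀ x : Γ, x * l = l * x := by
    intro x
    have hfact : Fact (Nat.Prime 2) := ⟨Nat.prime_two⟩
    have hc : (x * l * x⁻¹) ^ 2 = 1 := by
      rw [pow_two]
      have : x * l * x⁻¹ * (x * l * x⁻¹) = x * (l * l) * x⁻¹ := by group
      rw [this, hll]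
      group
    have hcne : x * l * x⁻¹ ≠ 1 := by
      intro h
      apply hl1
      have h2 : l = x⁻¹ * (x * l * x⁻¹) * x := by group
      rw [h2, h]
      group
    obtain ⟨w, -, hwu⟩ := hbin
    have e1 := hwu _ (orderOf_eq_prime hc hcne)
    have e2 := hwu _ hl
    have e3 : x * l * x⁻¹ = l := by rw [e1, e2]
    calc x * l = (x * l * x⁻¹) * x := by group
    _ = l * x := by rw [e3]
  -- g and adjacency
  set g : ZMod (2*n+1) → Γ := fun i => (f i).getD 1 with hg
  have hfg : ∀ i : ZMod (2*n+1), i ≠ 0 → f i = some (g i) := by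
    intro i hi
    cases h : f i with
    | none => exact absurd (hfi (h.trans hf0.symm)) hi
    | some a => simp [hg, h]
  have hCadj : ∀ i j : ZMod (2*n+1), C.Adj (f i) (f j) ↔ (i ≠ j ∧ (j = i + 1 ∨ i = j + 1)) := by
    intro i j
    rw [hCdef, cycleOn, SimpleGraph.fromRel_adj]
    constructor
    · rintro ⟨hne, ⟨k, hk1, hk2⟩ | ⟨k, hk1, hk2⟩⟩
      · obtain rfl := hfi hk1
        exact ⟨fun h => hne (congrArg f h), Or.inl (hfi hk2).symm⟩
      · obtain rfl := hfi hk1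
        exact ⟨fun h => hne (congrArg f h), Or.inr (hfi hk2).symm⟩
    · rintro ⟨hne, h | h⟩
      · exact ⟨fun hh => hne (hfi hh), Or.inl ⟨i, rfl, by rw [h]⟩⟩
      · exact ⟨fun hh => hne (hfi hh), Or.inr ⟨j, rfl, by rw [h]⟩⟩
  have hadj : ∀ i : ZMod (2*n+1), C.Adj (f i) (f (i+1)) :=
    fun i => (hCadj i (i+1)).mpr ⟨htwo2 i, Or.inl rfl⟩
  -- automorphism transport
  have hauto : ∀ u v : Option Γ, C.Adj u v → C.Adj (u.map (· * l)) (v.map (· * l)) := by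
    intro u v huv
    have h2 : ((Equiv.optionCongr (Equiv.mulRight l)) • C).Adj
        (Equiv.optionCongr (Equiv.mulRight l) u) (Equiv.optionCongr (Equiv.mulRight l) v) := by
      rw [perm_smul_graph, SimpleGraph.map_adj]
      exact ⟨u, v, huv, rfl, rfl⟩
    rw [hfix, optionCongr_mulRight_apply, optionCongr_mulRight_apply] at h2
    exact h2
  -- reflection
  have hreflN : ∀ k : ℕ, ((f ((k:ℕ) : ZMod (2*n+1))).map (· * l) = f (-((k:ℕ) : ZMod (2*n+1))))
      ∧ ((f ((k+1 : ℕ) : ZMod (2*n+1))).map (· * l) = f (-((k+1:ℕ) : ZMod (2*n+1)))) := by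
    intro k
    induction k with
    | zero =>
      constructor
      · simp [hf0]
      · have hadj1 := hauto _ _ (hadj 0)
        rw [hf0] at hadj1
        simp only [Option.map_none, zero_add] at hadj1
        obtain ⟨j, hj⟩ := hfs ((f 1).map (· * l))
        rw [← hj, ← hf0] at hadj1
        rw [hCadj 0 j] at hadj1
        obtain ⟨hne, hcase | hcase⟩ := hadj1
        · exfalso
          rw [hcase, zero_add] at hj
          rw [hfg 1 hone] at hj
          simp only [Option.map_some] at hj
          have : g 1 = g 1 * l := Option.some.inj hj
          apply hl1
          exact mul_left_cancel (this.symm.trans (mul_one (g 1)).symm)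
        · have hjv : j = -1 := eq_neg_of_add_eq_zero_left hcase.symm
          rw [hjv] at hj
          push_cast
          exact hj.symm
    | succ k ih =>
      refine ⟨ih.2, ?_⟩
      have hadjk := hauto _ _ (hadj ((k+1 : ℕ) : ZMod (2*n+1)))
      rw [ih.2] at hadjk
      obtain ⟨j, hj⟩ := hfs ((f (((k+1:ℕ) : ZMod (2*n+1)) + 1)).map (· * l))
      rw [← hj, hCadj] at hadjk
      obtain ⟨hne, hcase | hcase⟩ := hadjk
      · exfalso
        have hjk : j = -((k:ℕ) : ZMod (2*n+1)) := by
          rw [hcase]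
          push_cast
          ring
        rw [hjk, ← ih.1] at hj
        have hfe : f ((k:ℕ) : ZMod (2*n+1)) = f (((k+1:ℕ) : ZMod (2*n+1)) + 1) := by
          rcases hfs' : f ((k:ℕ) : ZMod (2*n+1)) with _ | a <;>
            rcases hfs'' : f (((k+1:ℕ) : ZMod (2*n+1)) + 1) with _ | b
          · rfl
          · rw [hfs', hfs''] at hj; simp at hj
          · rw [hfs', hfs''] at hj; simp at hj
          · rw [hfs', hfs''] at hj
            simp only [Option.map_some] at hj
            have hab : a = b := mul_right_cancel (Option.some.inj hj)
            rw [hab]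
        have := hfi hfe
        apply htwo
        push_cast at this
        linear_combination -this
      · have hjv : j = -(((k+1:ℕ) : ZMod (2*n+1)) + 1) := by
          linear_combination -hcase
        rw [hjv] at hj
        push_cast at hj ⊢
        exact hj.symm
  have hrefl : ∀ i : ZMod (2*n+1), (f i).map (· * l) = f (-i) := by
    intro i
    have := (hreflN i.val).1
    rwa [ZMod.natCast_rightInverse i] at this
  have hgneg : ∀ i : ZMod (2*n+1), i ≠ 0 → g (-i) = g i * l := by
    intro i hi
    have h1 := hrefl i
    rw [hfg i hi, hfg (-i) (neg_ne_zero.mpr hi)] at h1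
    simp only [Option.map_some] at h1
    exact (Option.some.inj h1).symm
  -- differences
  set d : ℕ → Γ := fun i => g (i : ZMod (2*n+1)) * (g ((i : ZMod (2*n+1)) + 1))⁻¹ with hd
  have hcast1 : ∀ i : ℕ, 1 ≤ i → i ≤ 2*n - 1 → ((i : ZMod (2*n+1)) + 1 ≠ 0) := by
    intro i h1 h2
    have := hcastne (i+1) (by omega) (by omega)
    push_cast at this
    exact this
  have hdne1 : ∀ i : ℕ, 1 ≤ i → i ≤ 2*n - 1 → d i ≠ 1 := by
    intro i h1 h2 h
    rw [hd] at h
    simp only at h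
    have hgg : g ((i : ZMod (2*n+1))) = g ((i : ZMod (2*n+1)) + 1) := mul_inv_eq_one.mp h
    have hfe : f (i : ZMod (2*n+1)) = f ((i : ZMod (2*n+1)) + 1) := by
      rw [hfg _ (hcastne i h1 (by omega)), hfg _ (hcast1 i h1 h2), hgg]
    exact htwo2 _ (hfi hfe)
  have hmod : ∀ i : ℕ, i ≤ 2*n → ((2*n - i : ℕ) : ZMod (2*n+1)) = -((i : ZMod (2*n+1)) + 1) := by
    intro i hi
    have h' : ((2*n - i) + (i + 1) : ℕ) = 2*n+1 := by omega
    have h2 : (((2*n - i) + (i+1) : ℕ) : ZMod (2*n+1)) = 0 := by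
      rw [h']; exact ZMod.natCast_self _
    push_cast at h2
    linear_combination h2
  have hdrev : ∀ i : ℕ, 1 ≤ i → i ≤ 2*n - 1 → d (2*n - i) = (d i)⁻¹ := by
    intro i h1 h2
    have hiz : ((i : ZMod (2*n+1))) ≠ 0 := hcastne i h1 (by omega)
    have hi1z := hcast1 i h1 h2
    rw [hd]
    simp only
    rw [hmod i (by omega)]
    have e2 : -((i : ZMod (2*n+1)) + 1) + 1 = -(i : ZMod (2*n+1)) := by ring
    rw [e2, hgneg _ hi1z, hgneg _ hiz]
    group
  have hdn : d n = l := by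
    have hnz : ((n : ZMod (2*n+1))) ≠ 0 := hcastne n hn (by omega)
    have e1 : ((n : ZMod (2*n+1))) + 1 = -((n : ZMod (2*n+1))) := by
      have h2 : ((2*n+1 : ℕ) : ZMod (2*n+1)) = 0 := ZMod.natCast_self _
      push_cast at h2
      linear_combination h2
    rw [hd]
    simp only
    rw [e1, hgneg _ hnz, mul_inv_rev, hlinv, ← hcent ((g ((n : ZMod (2*n+1))))⁻¹),
      ← mul_assoc, mul_inv_cancel, one_mul]
  have hsurj : ∀ x : Γ, x ≠ 1 → ∃ i : ℕ, (1 ≤ i ∧ i ≤ 2*n - 1) ∧ d i = x := by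
    intro x hx
    by_cases hxl : x = l
    · exact ⟨n, ⟨hn, by omega⟩, by rw [hdn, hxl]⟩
    · have hmem : x ∈ {x : Γ | x ≠ 1 ∧ x ≠ l} := ⟨hx, hxl⟩
      rw [← hdiff] at hmem
      obtain ⟨i, hi1, hi2, a, b, hfa, hfb, hab⟩ := hmem
      have hin : i ≤ 2*n - 1 := by omega
      have hiz : ((i : ZMod (2*n+1))) ≠ 0 := hcastne i hi1 (by omega)
      have hi1z := hcast1 i hi1 hin
      have ha : a = g (i : ZMod (2*n+1)) := by
        rw [hfg _ hiz] at hfa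
        exact (Option.some.inj hfa).symm
      have hb : b = g ((i : ZMod (2*n+1)) + 1) := by
        rw [hfg _ hi1z] at hfb
        exact (Option.some.inj hfb).symm
      subst ha hb
      rcases hab with rfl | rfl
      · exact ⟨i, ⟨hi1, hin⟩, rfl⟩
      · refine ⟨2*n - i, ⟨by omega, by omega⟩, ?_⟩
        rw [hdrev i hi1 hin, hd]
        simp only
        group
  have hDuniq : ∀ x : Γ, x ≠ 1 → ∃! i : ℕ, (1 ≤ i ∧ i ≤ 2*n-1) ∧ d i = x := by
    have himage : (Finset.Icc 1 (2*n-1)).image d = Finset.univ.erase (1:Γ) := by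
      apply subset_antisymm
      · intro x hx
        obtain ⟨i, hi, rfl⟩ := Finset.mem_image.mp hx
        rw [Finset.mem_Icc] at hi
        exact Finset.mem_erase.mpr ⟨hdne1 i hi.1 hi.2, Finset.mem_univ _⟩
      · intro x hx
        obtain ⟨i, hi, hdi⟩ := hsurj x (Finset.mem_erase.mp hx).1
        exact Finset.mem_image.mpr ⟨i, Finset.mem_Icc.mpr hi, hdi⟩
    have hinj : Set.InjOn d (Finset.Icc 1 (2*n-1)) := by
      apply Finset.injOn_of_card_image_eq
      rw [himage, Finset.card_erase_of_mem (Finset.mem_univ 1), Finset.card_univ, hcard,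
        Nat.card_Icc]
      omega
    intro x hx
    obtain ⟨i, hi, hdi⟩ := hsurj x hx
    refine ⟨i, ⟨hi, hdi⟩, ?_⟩
    rintro j ⟨hj, hdj⟩
    exact hinj (Finset.mem_coe.mpr (Finset.mem_Icc.mpr hj))
      (Finset.mem_coe.mpr (Finset.mem_Icc.mpr hi)) (hdj.trans hdi.symm)
  -- translate adjacency
  have hTadj : ∀ (y : Γ) (u v : Option Γ), (T y).Adj u v ↔
      C.Adj (u.map (· * y⁻¹)) (v.map (· * y⁻¹)) := by
    intro y u v
    rw [hT]
    simp only
    rw [smul_adj', sigma_inv, optionCongr_mulRight_apply, optionCongr_mulRight_apply]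
  have hTl : ∀ x : Γ, T (l * x) = T x := by
    intro x
    rw [hT]
    simp only
    rw [← sigma_mul x l, mul_smul, hfix]
  -- the two key lemmas
  have key1 : ∀ h : Γ, ∃ x : Γ, (T x).Adj none (some h) ∧
      ∀ y : Γ, (T y).Adj none (some h) → T y = T x := by
    intro h
    refine ⟨(g 1)⁻¹ * h, ?_, ?_⟩
    · rw [hTadj]
      simp only [Option.map_none, Option.map_some]
      rw [show h * ((g 1)⁻¹ * h)⁻¹ = g 1 by group]
      rw [← hf0, ← hfg 1 hone]
      simpa using hadj 0
    · intro y hy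
      rw [hTadj] at hy
      simp only [Option.map_none, Option.map_some] at hy
      obtain ⟨j, hj⟩ := hfs (some (h * y⁻¹))
      rw [← hf0, ← hj, hCadj] at hy
      obtain ⟨-, hc | hc⟩ := hy
      · rw [hc, zero_add, hfg 1 hone] at hj
        have e1 : g 1 = h * y⁻¹ := Option.some.inj hj
        have hyx : y = (g 1)⁻¹ * h := by rw [e1]; group
        rw [hyx]
      · have hjv : j = -1 := eq_neg_of_add_eq_zero_left hc.symm
        rw [hjv, hfg (-1) (neg_ne_zero.mpr hone)] at hj
        have e1 : g (-1) = h * y⁻¹ := Option.some.inj hj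
        rw [hgneg 1 hone] at e1
        have hyx : y = l * ((g 1)⁻¹ * h) := by
          have h7 : y = (g 1 * l)⁻¹ * h := by rw [e1]; group
          rw [h7, mul_inv_rev, hlinv, mul_assoc]
        rw [hyx, hTl]
  have key2 : ∀ a b : Γ, a ≠ b → ∃ x : Γ, (T x).Adj (some a) (some b) ∧
      ∀ y : Γ, (T y).Adj (some a) (some b) → T y = T x := by
    intro a b hab
    have hdd : a * b⁻¹ ≠ 1 := by
      intro h
      exact hab (mul_inv_eq_one.mp h)
    obtain ⟨i, ⟨⟨hi1, hi2⟩, hdi⟩, hiu⟩ := hDuniq _ hdd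
    rw [hd] at hdi
    simp only at hdi
    have hiz : ((i : ZMod (2*n+1))) ≠ 0 := hcastne i hi1 (by omega)
    have hi1z := hcast1 i hi1 hi2
    refine ⟨(g (i : ZMod (2*n+1)))⁻¹ * a, ?_, ?_⟩
    · rw [hTadj]
      simp only [Option.map_some]
      have e1 : a * ((g (i : ZMod (2*n+1)))⁻¹ * a)⁻¹ = g (i : ZMod (2*n+1)) := by group
      have h4 : g ((i : ZMod (2*n+1)) + 1) * (g (i : ZMod (2*n+1)))⁻¹ = b * a⁻¹ := by
        have := congrArg (fun z : Γ => z⁻¹) hdi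
        simpa [mul_inv_rev] using this
      have e2 : b * ((g (i : ZMod (2*n+1)))⁻¹ * a)⁻¹ = g ((i : ZMod (2*n+1)) + 1) := by
        have h5 : b * ((g (i : ZMod (2*n+1)))⁻¹ * a)⁻¹ = (b * a⁻¹) * g (i : ZMod (2*n+1)) := by
          group
        rw [h5, ← h4]
        group
      rw [e1, e2, ← hfg _ hiz, ← hfg _ hi1z]
      exact hadj _
    · intro y hy
      rw [hTadj] at hy
      simp only [Option.map_some] at hy
      obtain ⟨j, hj⟩ := hfs (some (a * y⁻¹))
      obtain ⟨k, hk⟩ := hfs (some (b * y⁻¹))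
      rw [← hj, ← hk, hCadj] at hy
      obtain ⟨hne, hc | hc⟩ := hy
      · -- k = j + 1
        subst hc
        have hjz : j ≠ 0 := by
          intro h0
          rw [h0, hf0] at hj
          exact Option.some_ne_none _ hj.symm
        have hj1z : j + 1 ≠ 0 := by
          intro h0
          rw [h0, hf0] at hk
          exact Option.some_ne_none _ hk.symm
        have hvj : ((j.val : ℕ) : ZMod (2*n+1)) = j := ZMod.natCast_rightInverse j
        have hv1 : 1 ≤ j.val := by
          rcases Nat.eq_zero_or_pos j.val with h0 | h0
          · exact absurd (by rw [← hvj, h0]; simp) hjz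
          · exact h0
        have hvlt : j.val < 2*n+1 := ZMod.val_lt j
        have hvne : j.val ≠ 2*n := by
          intro h0
          apply hj1z
          rw [← hvj, h0]
          have h2 : ((2*n+1 : ℕ) : ZMod (2*n+1)) = 0 := ZMod.natCast_self _
          push_cast at h2 ⊢
          linear_combination h2
        have e1 : g j = a * y⁻¹ := by
          rw [hfg j hjz] at hj
          exact Option.some.inj hj
        have e2 : g (j + 1) = b * y⁻¹ := by
          rw [hfg _ hj1z] at hk
          exact Option.some.inj hk
        have hdj : d j.val = a * b⁻¹ := by
          rw [hd]
          simp only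
          rw [hvj, e1, e2]
          group
        have hji : j.val = i := hiu j.val ⟨⟨hv1, by omega⟩, hdj⟩
        have hgij : g (i : ZMod (2*n+1)) = a * y⁻¹ := by
          rw [← hji, hvj]
          exact e1
        have hyx : y = (g (i : ZMod (2*n+1)))⁻¹ * a := by
          rw [hgij]
          group
        rw [hyx]
      · -- j = k + 1
        subst hc
        have hkz : k ≠ 0 := by
          intro h0
          rw [h0, hf0] at hk
          exact Option.some_ne_none _ hk.symm
        have hk1z : k + 1 ≠ 0 := by
          intro h0
          rw [h0, hf0] at hj
          exact Option.some_ne_none _ hj.symm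
        have hvk : ((k.val : ℕ) : ZMod (2*n+1)) = k := ZMod.natCast_rightInverse k
        have hv1 : 1 ≤ k.val := by
          rcases Nat.eq_zero_or_pos k.val with h0 | h0
          · exact absurd (by rw [← hvk, h0]; simp) hkz
          · exact h0
        have hvlt : k.val < 2*n+1 := ZMod.val_lt k
        have hvne : k.val ≠ 2*n := by
          intro h0
          apply hk1z
          rw [← hvk, h0]
          have h2 : ((2*n+1 : ℕ) : ZMod (2*n+1)) = 0 := ZMod.natCast_self _
          push_cast at h2 ⊢
          linear_combination h2
        have e1 : g k = b * y⁻¹ := by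
          rw [hfg k hkz] at hk
          exact Option.some.inj hk
        have e2 : g (k + 1) = a * y⁻¹ := by
          rw [hfg _ hk1z] at hj
          exact Option.some.inj hj
        have hdd' : b * a⁻¹ ≠ 1 := by
          intro h
          exact hab (mul_inv_eq_one.mp h).symm
        have hdk : d k.val = b * a⁻¹ := by
          rw [hd]
          simp only
          rw [hvk, e1, e2]
          group
        have h2n : d (2*n - i) = b * a⁻¹ := by
          rw [hdrev i hi1 hi2, hd]
          simp only
          rw [hdi]
          group
        obtain ⟨i', hi'c, hiu'⟩ := hDuniq _ hdd'
        have ha1 := hiu' k.val ⟨⟨hv1, by omega⟩, hdk⟩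
        have ha2 := hiu' (2*n - i) ⟨⟨by omega, by omega⟩, h2n⟩
        have hk2n : k.val = 2*n - i := ha1.trans ha2.symm
        have hkc : k = -((i : ZMod (2*n+1)) + 1) := by
          rw [← hvk, hk2n]
          exact hmod i (by omega)
        have e3 : g k = g ((i : ZMod (2*n+1)) + 1) * l := by
          rw [hkc]
          exact hgneg _ hi1z
        have h5 : (g ((i : ZMod (2*n+1)) + 1))⁻¹ * b = (g (i : ZMod (2*n+1)))⁻¹ * a := by
          calc (g ((i : ZMod (2*n+1)) + 1))⁻¹ * b
              = (g (i : ZMod (2*n+1)))⁻¹ * (g (i : ZMod (2*n+1)) *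
                (g ((i : ZMod (2*n+1)) + 1))⁻¹) * b := by group
          _ = (g (i : ZMod (2*n+1)))⁻¹ * (a * b⁻¹) * b := by rw [hdi]
          _ = (g (i : ZMod (2*n+1)))⁻¹ * a := by group
        have h6 : b * y⁻¹ = g ((i : ZMod (2*n+1)) + 1) * l := by rw [← e1, e3]
        have h7 : y = l⁻¹ * ((g ((i : ZMod (2*n+1)) + 1))⁻¹ * b) := by
          calc y = (g ((i : ZMod (2*n+1)) + 1) * l)⁻¹ *
              (g ((i : ZMod (2*n+1)) + 1) * l) * y := by group
          _ = (g ((i : ZMod (2*n+1)) + 1) * l)⁻¹ * (b * y⁻¹) * y := by rw [h6]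
          _ = l⁻¹ * ((g ((i : ZMod (2*n+1)) + 1))⁻¹ * b) := by group
        have hyx : y = l * ((g (i : ZMod (2*n+1)))⁻¹ * a) := by
          rw [h7, hlinv, h5]
        rw [hyx, hTl]
  -- C is a Hamiltonian cycle
  have hreach : ∀ k : ℕ, C.Reachable (f 0) (f (k : ZMod (2*n+1))) := by
    intro k
    induction k with
    | zero => simpa using SimpleGraph.Reachable.refl (f 0)
    | succ k ih =>
      have hstep := (hadj ((k : ℕ) : ZMod (2*n+1))).reachable
      have : ((k+1 : ℕ) : ZMod (2*n+1)) = ((k : ℕ) : ZMod (2*n+1)) + 1 := by push_cast; ring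
      rw [this]
      exact ih.trans hstep
  have hHamC : IsHamCycle C := by
    constructor
    · refine ⟨fun u v => ?_⟩
      obtain ⟨iu, rfl⟩ := hfs u
      obtain ⟨iv, rfl⟩ := hfs v
      have hu := hreach iu.val
      have hv := hreach iv.val
      rw [ZMod.natCast_rightInverse iu] at hu
      rw [ZMod.natCast_rightInverse iv] at hv
      exact hu.symm.trans hv
    · intro v
      obtain ⟨i, rfl⟩ := hfs v
      have hnbr : C.neighborSet (f i) = {f (i+1), f (i-1)} := by
        ext w
        obtain ⟨j, rfl⟩ := hfs w
        simp only [SimpleGraph.mem_neighborSet, Set.mem_insert_iff, Set.mem_singleton_iff]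
        rw [hCadj]
        constructor
        · rintro ⟨hne, h | h⟩
          · left; rw [h]
          · right
            have : j = i - 1 := by linear_combination -h
            rw [this]
        · rintro (h | h)
          · have hj : j = i + 1 := hfi h
            refine ⟨?_, Or.inl hj⟩
            rw [hj]; exact htwo2 i
          · have hj : j = i - 1 := hfi h
            refine ⟨?_, Or.inr ?_⟩
            · rw [hj]
              intro hh
              apply hone
              linear_combination hh
            · rw [hj]; ring
      rw [hnbr]
      apply Set.ncard_pair
      intro h
      apply htwo
      have := hfi h
      linear_combination this
  -- assembly
  constructor
  · constructor
    · rintro H ⟨x, rfl⟩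
      exact ham_smul _ hHamC
    · intro e he
      induction e using Sym2.ind with
      | _ a b =>
        rw [SimpleGraph.mem_edgeSet, SimpleGraph.top_adj] at he
        have main : ∃ x : Γ, (T x).Adj a b ∧ ∀ y : Γ, (T y).Adj a b → T y = T x := by
          match a, b with
          | none, none => exact absurd rfl he
          | none, some h => exact key1 h
          | some h, none =>
            obtain ⟨x, h1, h2⟩ := key1 h
            exact ⟨x, h1.symm, fun y hy => h2 y hy.symm⟩
          | some a', some b' =>
            exact key2 a' b' (fun hh => he (by rw [hh]))
        obtain ⟨x, h1, h2⟩ := main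
        refine ⟨T x, ⟨⟨x, rfl⟩, (SimpleGraph.mem_edgeSet _).mpr h1⟩, ?_⟩
        rintro H ⟨⟨y, rfl⟩, hH⟩
        exact h2 y (((SimpleGraph.mem_edgeSet _).mp hH))
  · intro gg
    simp only [autHCS]
    rw [MulAction.mem_stabilizer_iff]
    ext H
    simp only [Set.mem_smul_set, Set.mem_range]
    constructor
    · rintro ⟨H', ⟨x, rfl⟩, rfl⟩
      refine ⟨x * gg, ?_⟩
      rw [hT]
      simp only
      rw [← sigma_mul gg x, mul_smul]
    · rintro ⟨x, rfl⟩
      refine ⟨T (x * gg⁻¹), ⟨x * gg⁻¹, rfl⟩, ?_⟩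
      rw [hT]
      simp only
      rw [← mul_smul, sigma_mul, inv_mul_cancel_right]
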